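/- Let B be a bicategory with objects x₀₀₀, x₀₀₁, x₀₀₂, x₀₁₀, x₀₁₁, x₀₁₂, x₁₀₀, x₁₀₁, x₁₀₂, x₁₁₀, x₁₁₁, x₁₁₂, 1-morphisms m₀₀₁ : x₀₀₀ ⟶ x₀₀₁, m₀₀₂ : x₀₀₁ ⟶ x₀₀₂, a₀₀₀ : x₀₀₀ ⟶ x₀₁₀, a₀₀₁ : x₀₀₁ ⟶ x₀₁₁, m₀₁₁ : x₀₁₀ ⟶ x₀₁₁, m₀₁₂ : x₀₁₁ ⟶ x₀₁₂, b₀₁₂ : x₀₁₂ ⟶ x₁₁₂, b₀₀₂ : x₀₀₂ ⟶ x₁₀₂, n₁₀₂ : x₁₀₂ ⟶ x₁₀₁, n₁₀₁ : x₁₀₁ ⟶ x₁₀₀, a₁₀₀ : x₁₀₀ ⟶ x₁₁₀, a₁₀₁ : x₁₀₁ ⟶ x₁₁₁, m₁₁₁ : x₁₁₀ ⟶ x₁₁₁, m₁₁₂ : x₁₁₁ ⟶ x₁₁₂, and 2-morphisms T₁ : a₀₀₀ ≫ m₀₁₁ ⟶ m₀₀₁ ≫ a₀₀₁ and B₁ :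 a₁₀₁ ⟶ n₁₀₁ ≫ a₁₀₀ ≫ m₁₁₁. Set f₁₂ = a₀₀₁ ≫ m₀₁₂ ≫ b₀₁₂, g₁₂ = m₀₀₂ ≫ b₀₀₂ ≫ n₁₀₂ ≫ a₁₀₁ ≫ m₁₁₂, f₀₂ = a₀₀₀ ≫ m₀₁₁ ≫ m₀₁₂ ≫ b₀₁₂ and g₀₂ = m₀₀₁ ≫ m₀₀₂ ≫ b₀₀₂ ≫ n₁₀₂ ≫ n₁₀₁ ≫ a₁₀₀ ≫ m₁₁₁ ≫ m₁₁₂ (composites taken with any fixed bracketing; all maps below are understood up to the canonical associator and unitor isomorphisms). Assume: (i) there is an adjunction m₀₀₁ ⊣ m₀₀₁ᴿ with counit ε : m₀₀₁ᴿ ≫ m₀₀₁ ⟶ 𝟙_{x₀₀₁}; (ii) the mate of T₁, namely the composite m₀₀₁ᴿ ≫ (a₀₀₀ ≫ m₀₁₁) ⟶ m₀₀₁ᴿ ≫ (m₀₀₁ ≫ a₀₀₁) ≅ (m₀₀₁ᴿ ≫ m₀₀₁) ≫ a₀₀₁ ⟶ 𝟙 ≫ a₀₀₁ ≅ a₀₀₁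 obtained by whiskering T₁ with m₀₀₁ᴿ and applying ε, is an invertible 2-morphism; (iii) B₁ is invertible. Then the map Hom_{B(x₀₀₁,x₁₁₂)}(f₁₂, g₁₂) → Hom_{B(x₀₀₀,x₁₁₂)}(f₀₂, g₀₂), sending α to the composite f₀₂ ⟶ m₀₀₁ ≫ f₁₂ (whiskering T₁ with m₀₁₂ ≫ b₀₁₂ on the right) followed by m₀₀₁ ≫ f₁₂ ⟶ m₀₀₁ ≫ g₁₂ (whiskering α with m₀₀₁ on the left) followed by m₀₀₁ ≫ g₁₂ ⟶ g₀₂ (whiskering B₁ into the a₁₀₁ factor), is a bijection. -/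
import Mathlib


open CategoryTheory CategoryTheory.Bicategory

namespace MapMonoidalesAux

variable {B : Type*} [Bicategory B]

/-- The hom-set equivalence coming from an adjunction `f ⊣ g` in a bicategory. -/
def adjHomEquiv {a b c : B} {f : a ⟶ b} {g : b ⟶ a} (adj : Bicategory.Adjunction f g)
    (u : a ⟶ c) (v : b ⟶ c) : (u ⟶ f ≫ v) ≃ (g ≫ u ⟶ v) where
  toFun χ := g ◁ χ ≫ (α_ g f v).inv ≫ adj.counit ▷ v ≫ (λ_ v).hom
  invFun ψ := (λ_ u).inv ≫ adj.unit ▷ u ≫ (α_ f g u).hom ≫ f ◁ ψ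
  left_inv χ := by
    calc (λ_ u).inv ≫ adj.unit ▷ u ≫ (α_ f g u).hom ≫
          f ◁ (g ◁ χ ≫ (α_ g f v).inv ≫ adj.counit ▷ v ≫ (λ_ v).hom)
        = 𝟙 u ⊗≫ (adj.unit ▷ u ≫ (f ≫ g) ◁ χ) ⊗≫ f ◁ adj.counit ▷ v ⊗≫ 𝟙 _ := by
          bicategory
      _ = 𝟙 u ⊗≫ χ ⊗≫ leftZigzag adj.unit adj.counit ▷ v ⊗≫ 𝟙 _ := by
          rw [← whisker_exchange]; bicategory
      _ = χ := by rw [adj.left_triangle]; bicategory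
  right_inv ψ := by
    calc g ◁ ((λ_ u).inv ≫ adj.unit ▷ u ≫ (α_ f g u).hom ≫ f ◁ ψ) ≫
          (α_ g f v).inv ≫ adj.counit ▷ v ≫ (λ_ v).hom
        = 𝟙 _ ⊗≫ g ◁ adj.unit ▷ u ⊗≫ ((g ≫ f) ◁ ψ ≫ adj.counit ▷ v) ⊗≫ 𝟙 _ := by
          bicategory
      _ = 𝟙 _ ⊗≫ rightZigzag adj.unit adj.counit ▷ u ⊗≫ ψ := by
          rw [whisker_exchange]; bicategory
      _ = ψ := by rw [adj.right_triangle]; bicategory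

theorem gen_key {a b c : B} {f : a ⟶ b} {g : b ⟶ a} (adj : Bicategory.Adjunction f g)
    {u : a ⟶ c} {v v' : b ⟶ c} (cm : u ⟶ f ≫ v) (α : v ⟶ v') :
    adjHomEquiv adj u v' (cm ≫ f ◁ α) = adjHomEquiv adj u v cm ≫ α := by
  dsimp [adjHomEquiv]
  calc g ◁ (cm ≫ f ◁ α) ≫ (α_ g f v').inv ≫ adj.counit ▷ v' ≫ (λ_ v').hom
      = 𝟙 _ ⊗≫ g ◁ cm ⊗≫ ((g ≫ f) ◁ α ≫ adj.counit ▷ v') ⊗≫ 𝟙 _ := by bicategory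
    _ = 𝟙 _ ⊗≫ g ◁ cm ⊗≫ (adj.counit ▷ v ≫ 𝟙 _ ◁ α) ⊗≫ 𝟙 _ := by
        rw [whisker_exchange]
    _ = (g ◁ cm ≫ (α_ g f v).inv ≫ adj.counit ▷ v ≫ (λ_ v).hom) ≫ α := by bicategory

theorem gen_bij {a b c : B} {f : a ⟶ b} {g : b ⟶ a} (adj : Bicategory.Adjunction f g)
    {u : a ⟶ c} {v v' : b ⟶ c} (cm : u ⟶ f ≫ v)
    (h : IsIso (g ◁ cm ≫ (α_ g f v).inv ≫ adj.counit ▷ v ≫ (λ_ v).hom)) :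
    Function.Bijective (fun α : v ⟶ v' => cm ≫ f ◁ α) := by
  set φ := g ◁ cm ≫ (α_ g f v).inv ≫ adj.counit ▷ v ≫ (λ_ v).hom with hφ
  have hpre : Function.Bijective (fun α : v ⟶ v' => φ ≫ α) := by
    rw [Function.bijective_iff_has_inverse]
    exact ⟨fun β => inv φ ≫ β, fun α => by simp, fun β => by simp⟩
  have : (fun α : v ⟶ v' => cm ≫ f ◁ α)
      = (adjHomEquiv adj u v').symm ∘ (fun α : v ⟶ v' => φ ≫ α) := by
    funext α
    rw [Function.comp_apply, Equiv.eq_symm_apply]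
    exact gen_key adj cm α
  rw [this]
  exact ((adjHomEquiv adj u v').symm.bijective).comp hpre

end MapMonoidalesAux

/-- (Lemma on composition with `T₁` and `B₁` being an equivalence,
formulated in a bicategory.)  Given the displayed 1- and 2-morphisms, assuming
`m₀₀₁` admits a right adjoint `m₀₀₁ᴿ`, the mate of `T₁` is invertible, and `B₁`
is invertible, the map `Hom(f₁₂, g₁₂) → Hom(f₀₂, g₀₂)` given by
`α ↦ B₁ ∘ (m₀₀₁ ◁ α) ∘ T₁` (inserted via whiskerings and the canonical
associators) is a bijection. -/
theorem map_monoidales_stmt1 {B : Type*} [Bicategory B]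
    {x000 x001 x002 x010 x011 x012 x100 x101 x102 x110 x111 x112 : B}
    (m001 : x000 ⟶ x001) (m002 : x001 ⟶ x002)
    (a000 : x000 ⟶ x010) (a001 : x001 ⟶ x011)
    (m011 : x010 ⟶ x011) (m012 : x011 ⟶ x012)
    (b012 : x012 ⟶ x112) (b002 : x002 ⟶ x102)
    (n102 : x102 ⟶ x101) (n101 : x101 ⟶ x100)
    (a100 : x100 ⟶ x110) (a101 : x101 ⟶ x111)
    (m111 : x110 ⟶ x111) (m112 : x111 ⟶ x112)
    (T1 : a000 ≫ m011 ⟶ m001 ≫ a001)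
    (B1 : a101 ⟶ n101 ≫ a100 ≫ m111)
    (m001R : x001 ⟶ x000) (adj : Bicategory.Adjunction m001 m001R)
    -- (ii) the mate of `T₁` is invertible:
    (hT1 : IsIso (m001R ◁ T1 ≫ (α_ m001R m001 a001).inv ≫
      adj.counit ▷ a001 ≫ (λ_ a001).hom))
    -- (iii) `B₁` is invertible:
    (hB1 : IsIso B1) :
    Function.Bijective
      (fun α : (a001 ≫ m012 ≫ b012 ⟶ m002 ≫ b002 ≫ n102 ≫ a101 ≫ m112) =>
        ((α_ a000 m011 (m012 ≫ b012)).inv ≫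
          T1 ▷ (m012 ≫ b012) ≫
          (α_ m001 a001 (m012 ≫ b012)).hom ≫
          m001 ◁ α ≫
          m001 ◁ (m002 ◁ (b002 ◁ (n102 ◁ (B1 ▷ m112)))) ≫
          m001 ◁ (m002 ◁ (b002 ◁ (n102 ◁ ((α_ n101 (a100 ≫ m111) m112).hom ≫
            n101 ◁ (α_ a100 m111 m112).hom)))) :
        (a000 ≫ m011 ≫ m012 ≫ b012 ⟶
          m001 ≫ m002 ≫ b002 ≫ n102 ≫ n101 ≫ a100 ≫ m111 ≫ m112))) := by
  haveI := hB1
  haveI := hT1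
  set cm : (a000 ≫ m011 ≫ m012 ≫ b012) ⟶ m001 ≫ (a001 ≫ m012 ≫ b012) :=
    (α_ a000 m011 (m012 ≫ b012)).inv ≫ T1 ▷ (m012 ≫ b012) ≫
      (α_ m001 a001 (m012 ≫ b012)).hom with hcm
  set e : (m002 ≫ b002 ≫ n102 ≫ a101 ≫ m112) ⟶
      (m002 ≫ b002 ≫ n102 ≫ n101 ≫ a100 ≫ m111 ≫ m112) :=
    m002 ◁ (b002 ◁ (n102 ◁ (B1 ▷ m112))) ≫
      m002 ◁ (b002 ◁ (n102 ◁ ((α_ n101 (a100 ≫ m111) m112).hom ≫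
        n101 ◁ (α_ a100 m111 m112).hom))) with he
  have hIso : IsIso (m001R ◁ cm ≫ (α_ m001R m001 (a001 ≫ m012 ≫ b012)).inv ≫
      adj.counit ▷ (a001 ≫ m012 ≫ b012) ≫ (λ_ (a001 ≫ m012 ≫ b012)).hom) := by
    have hmate : m001R ◁ cm ≫ (α_ m001R m001 (a001 ≫ m012 ≫ b012)).inv ≫
        adj.counit ▷ (a001 ≫ m012 ≫ b012) ≫ (λ_ (a001 ≫ m012 ≫ b012)).hom
        = m001R ◁ (α_ a000 m011 (m012 ≫ b012)).inv ≫
          (α_ m001R (a000 ≫ m011) (m012 ≫ b012)).inv ≫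
          (m001R ◁ T1 ≫ (α_ m001R m001 a001).inv ≫
            adj.counit ▷ a001 ≫ (λ_ a001).hom) ▷ (m012 ≫ b012) := by
      rw [hcm]; bicategory
    rw [hmate]; infer_instance
  have hfun : (fun α : (a001 ≫ m012 ≫ b012 ⟶ m002 ≫ b002 ≫ n102 ≫ a101 ≫ m112) =>
        ((α_ a000 m011 (m012 ≫ b012)).inv ≫
          T1 ▷ (m012 ≫ b012) ≫
          (α_ m001 a001 (m012 ≫ b012)).hom ≫
          m001 ◁ α ≫
          m001 ◁ (m002 ◁ (b002 ◁ (n102 ◁ (B1 ▷ m112)))) ≫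
          m001 ◁ (m002 ◁ (b002 ◁ (n102 ◁ ((α_ n101 (a100 ≫ m111) m112).hom ≫
            n101 ◁ (α_ a100 m111 m112).hom)))) :
        (a000 ≫ m011 ≫ m012 ≫ b012 ⟶
          m001 ≫ m002 ≫ b002 ≫ n102 ≫ n101 ≫ a100 ≫ m111 ≫ m112)))
      = (fun α : (a001 ≫ m012 ≫ b012 ⟶ m002 ≫ b002 ≫ n102 ≫ a101 ≫ m112) =>
          cm ≫ m001 ◁ (α ≫ e)) := by
    funext α
    rw [hcm, he]
    simp [Bicategory.whiskerLeft_comp]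
  rw [hfun]
  have hbije : Function.Bijective
      (fun α : (a001 ≫ m012 ≫ b012 ⟶ m002 ≫ b002 ≫ n102 ≫ a101 ≫ m112) => α ≫ e) := by
    rw [Function.bijective_iff_has_inverse]
    exact ⟨fun β => β ≫ inv e, fun α => by simp, fun β => by simp⟩
  exact (MapMonoidalesAux.gen_bij adj cm hIso).comp hbije
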